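/- Let 0 < α ≤ η/8 and let G be an (η, α)-robust graph on n vertices. Then for every vertex x ∈ V(G) there exists an integer k with 1 ≤ k ≤ ⌊1/α²⌋ − 1 and a partition {X₁, …, X_k} of V(G)∖{x} such that X₁ = N(x) and for all 1 ≤ i ≤ k−1, every vertex of X_{i+1} has at least α²n/k neighbors in X_i. -/

import Mathlib

/-- Number of ordered pairs `(x, y)` with `x ∈ X`, `y ∈ Y` and `xy ∈ E(G)`. -/
noncomputable def eBetween {V : Type*} (G : SimpleGraph V) (X Y : Set V) : ℕ :=
  {p : V × V | p.1 ∈ X ∧ p.2 ∈ Y ∧ G.Adj p.1 p.2}.ncard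

/-- Number of neighbors of `v` inside the set `S`. -/
noncomputable def nbrIn {V : Type*} (G : SimpleGraph V) (v : V) (S : Set V) : ℕ :=
  (G.neighborSet v ∩ S).ncard

section basics
variable {V : Type} [Fintype V] (G : SimpleGraph V)

lemma nbrIn_le_ncard (v : V) (S : Set V) : nbrIn G v S ≤ S.ncard :=
  Set.ncard_le_ncard Set.inter_subset_right (Set.toFinite S)

lemma nbrIn_mono (v : V) {S T : Set V} (h : S ⊆ T) : nbrIn G v S ≤ nbrIn G v T :=
  Set.ncard_le_ncard (Set.inter_subset_inter_right _ h) (Set.toFinite _)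

lemma nbrIn_union_le (v : V) (A B : Set V) :
    nbrIn G v (A ∪ B) ≤ nbrIn G v A + nbrIn G v B := by
  rw [nbrIn, Set.inter_union_distrib_left]
  exact Set.ncard_union_le _ _

lemma nbrIn_biUnion_le (v : V) (s : Finset ℕ) (f : ℕ → Set V) :
    nbrIn G v (⋃ j ∈ s, f j) ≤ ∑ j ∈ s, nbrIn G v (f j) := by
  classical
  induction s using Finset.induction with
  | empty => simp [nbrIn]
  | insert _ _ h ih =>
    rename_i a s
    rw [Finset.set_biUnion_insert, Finset.sum_insert h]
    exact le_trans (nbrIn_union_le G v _ _) (by omega)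

lemma deg_split (v : V) (A : Set V) :
    (G.neighborSet v).ncard = nbrIn G v A + nbrIn G v Aᶜ := by
  rw [nbrIn, nbrIn, ← Set.ncard_union_eq]
  · rw [← Set.inter_union_distrib_left, Set.union_compl_self, Set.inter_univ]
  · exact Set.disjoint_of_subset Set.inter_subset_right Set.inter_subset_right
      disjoint_compl_right

lemma nbrIn_singleton_eq_zero {v x : V} (h : ¬ G.Adj v x) : nbrIn G v {x} = 0 := by
  rw [nbrIn, Set.ncard_eq_zero (Set.toFinite _)]
  ext w
  simp only [Set.mem_inter_iff, Set.mem_singleton_iff, SimpleGraph.mem_neighborSet,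
    Set.mem_empty_iff_false, iff_false]
  rintro ⟨hw, rfl⟩; exact h hw

lemma eBetween_eq_sum (Y Z : Set V) :
    eBetween G Y Z = ∑ v ∈ Y.toFinite.toFinset, nbrIn G v Z := by
  classical
  rw [eBetween, Set.ncard_eq_toFinset_card']
  rw [Finset.card_eq_sum_card_fiberwise (f := Prod.fst) (t := Y.toFinite.toFinset)
    (fun p hp => by simp at hp ⊢; exact hp.1)]
  refine Finset.sum_congr rfl fun v hv => ?_
  rw [nbrIn, Set.ncard_eq_toFinset_card']
  apply Finset.card_bij (fun p _ => p.2)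
  · intro p hp
    simp at hp ⊢
    obtain ⟨⟨h1, h2, h3⟩, h4⟩ := hp
    subst h4
    exact ⟨h3, h2⟩
  · intro p hp q hq hpq
    simp at hp hq
    exact Prod.ext (hp.2.trans hq.2.symm) hpq
  · intro w hw
    simp only [Set.Finite.mem_toFinset] at hv
    simp only [Set.mem_toFinset, Set.mem_inter_iff, SimpleGraph.mem_neighborSet] at hw
    refine ⟨⟨v, w⟩, ?_, rfl⟩
    simp only [Finset.mem_filter, Set.mem_toFinset, Set.mem_setOf_eq]
    exact ⟨⟨hv, hw.2, hw.1⟩, trivial⟩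

end basics

section cascade
variable {V : Type} [Fintype V]

noncomputable def casc (G : SimpleGraph V) (τ : ℝ) (x : V) : ℕ → Set V × Set V
  | 0 => (∅, {x})
  | 1 => (G.neighborSet x, insert x (G.neighborSet x))
  | (i+2) =>
    let p := casc G τ x (i+1)
    ({v | v ∉ p.2 ∧ τ ≤ (nbrIn G v p.1 : ℝ)},
     p.2 ∪ {v | v ∉ p.2 ∧ τ ≤ (nbrIn G v p.1 : ℝ)})

variable (G : SimpleGraph V) (τ : ℝ) (x : V)

lemma casc_succ_succ (i : ℕ) :
    casc G τ x (i+2) =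
      ({v | v ∉ (casc G τ x (i+1)).2 ∧ τ ≤ (nbrIn G v (casc G τ x (i+1)).1 : ℝ)},
       (casc G τ x (i+1)).2 ∪
         {v | v ∉ (casc G τ x (i+1)).2 ∧ τ ≤ (nbrIn G v (casc G τ x (i+1)).1 : ℝ)}) := by
  rw [casc]

lemma cZ_mono : Monotone fun i => (casc G τ x i).2 := by
  apply monotone_nat_of_le_succ
  intro i
  match i with
  | 0 => simp [casc]
  | (j+1) => rw [casc_succ_succ]; exact Set.subset_union_left

lemma mem_cZ (i : ℕ) : x ∈ (casc G τ x i).2 :=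
  cZ_mono G τ x (Nat.zero_le i) (by simp [casc])

lemma cX_subset_cZ (i : ℕ) : (casc G τ x i).1 ⊆ (casc G τ x i).2 := by
  match i with
  | 0 => simp [casc]
  | 1 => simp [casc]
  | (j+2) => rw [casc_succ_succ]; exact Set.subset_union_right

lemma cX_disj_cZ (i : ℕ) : Disjoint ((casc G τ x (i+1)).1) ((casc G τ x i).2) := by
  rw [Set.disjoint_left]
  match i with
  | 0 =>
    intro v hv
    simp [casc] at hv ⊢
    rintro rfl; exact G.irrefl hv
  | (j+1) =>
    rw [casc_succ_succ]
    intro v hv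
    exact hv.1

lemma cX_pairwise_disj {i j : ℕ} (h : i < j) :
    Disjoint ((casc G τ x i).1) ((casc G τ x j).1) := by
  obtain ⟨m, rfl⟩ : ∃ m, j = m + 1 := ⟨j - 1, by omega⟩
  exact Set.disjoint_of_subset
    ((cX_subset_cZ G τ x i).trans (cZ_mono G τ x (by omega : i ≤ m)))
    (subset_refl _) (cX_disj_cZ G τ x m).symm

lemma cZ_eq_union (i : ℕ) :
    (casc G τ x i).2 = {x} ∪ ⋃ j ∈ Finset.Icc 1 i, (casc G τ x j).1 := by
  induction i with
  | zero => simp [casc]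
  | succ m ih =>
    have : (casc G τ x (m+1)).2 = (casc G τ x m).2 ∪ (casc G τ x (m+1)).1 := by
      match m with
      | 0 => simp [casc]
      | (j+1) => rw [casc_succ_succ]
    rw [this, ih]
    rw [show Finset.Icc 1 (m+1) = insert (m+1) (Finset.Icc 1 m) by
      ext a; simp [Finset.mem_Icc]; omega]
    rw [Finset.set_biUnion_insert]
    ext v; simp only [Set.mem_union]; tauto

lemma nbrIn_lt_of_not_mem {j : ℕ} (hj : 1 ≤ j) {v : V}
    (hv : v ∉ (casc G τ x (j+1)).2) :
    (nbrIn G v ((casc G τ x j).1) : ℝ) < τ := by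
  obtain ⟨m, rfl⟩ : ∃ m, j = m + 1 := ⟨j - 1, by omega⟩
  rw [casc_succ_succ] at hv
  simp only [Set.mem_union, Set.mem_setOf_eq, not_or, not_and] at hv
  by_contra h
  push_neg at h
  exact hv.2 hv.1 h

lemma not_adj_of_not_mem_cZ {i : ℕ} (hi : 1 ≤ i) {v : V}
    (hv : v ∉ (casc G τ x i).2) : ¬ G.Adj v x := by
  intro h
  apply hv
  apply cZ_mono G τ x hi
  show v ∈ (casc G τ x 1).2
  simp [casc]
  exact Or.inr h.symm

end cascade

set_option maxHeartbeats 2000000 in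
/-- if `0 < α ≤ η/8` and `G` is `(η, α)`-robust on `n` vertices, then every
vertex `x` has a spanning `(k, α²)`-neighborhood cascade with `1 ≤ k ≤ ⌊1/α²⌋ - 1`:
a partition `{X₁, …, X_k}` of `V(G) ∖ {x}` with `X₁ = N(x)` and, for `1 ≤ i ≤ k - 1`,
every vertex of `X_{i+1}` has at least `α²n/k` neighbors in `X_i`. -/
theorem lemma_neighborcascade {V : Type} [Fintype V] (G : SimpleGraph V) (n : ℕ)
    (hn : Fintype.card V = n) (η α : ℝ) (hα : 0 < α) (hαη : α ≤ η / 8)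
    (hdeg : ∀ v : V, η * n ≤ ((G.neighborSet v).ncard : ℝ))
    (hcut : ∀ X : Set V, α * X.ncard * Xᶜ.ncard ≤ (eBetween G X Xᶜ : ℝ)) :
    ∀ x : V, ∃ (k : ℕ) (X : ℕ → Set V),
      1 ≤ k ∧ (k : ℤ) ≤ ⌊1 / α ^ 2⌋ - 1 ∧
      (∀ i ∈ Set.Icc 1 k, ∀ j ∈ Set.Icc 1 k, i ≠ j → Disjoint (X i) (X j)) ∧
      (⋃ i ∈ Set.Icc 1 k, X i) = {x}ᶜ ∧
      X 1 = G.neighborSet x ∧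
      (∀ i : ℕ, 1 ≤ i → i + 1 ≤ k → ∀ v ∈ X (i + 1),
        α ^ 2 * n / k ≤ (nbrIn G v (X i) : ℝ)) := by
  intro x
  classical
  -- basic numeric facts
  have hn1 : 1 ≤ n := by
    rw [← hn]
    exact Fintype.card_pos_iff.mpr ⟨x⟩
  have hnR : (1:ℝ) ≤ n := by exact_mod_cast hn1
  have hnpos : (0:ℝ) < n := by linarith
  have hcompl_card : ({x}ᶜ : Set V).ncard = n - 1 := by
    have h1 : ({x} : Set V).ncard = 1 := Set.ncard_singleton x
    have := Set.ncard_add_ncard_compl ({x} : Set V)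
    rw [h1] at this
    have hcard : Nat.card V = n := by rw [Nat.card_eq_fintype_card, hn]
    omega
  have hdegx : η * n ≤ ((G.neighborSet x).ncard : ℝ) := hdeg x
  have hNsub : G.neighborSet x ⊆ ({x}ᶜ : Set V) := by
    intro v hv
    simp only [Set.mem_compl_iff, Set.mem_singleton_iff]
    rintro rfl
    exact G.irrefl hv
  have hNle : ((G.neighborSet x).ncard : ℝ) ≤ (n:ℝ) - 1 := by
    have := Set.ncard_le_ncard hNsub (Set.toFinite _)
    rw [hcompl_card] at this
    have : ((G.neighborSet x).ncard : ℝ) ≤ ((n-1 : ℕ) : ℝ) := by exact_mod_cast this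
    rw [Nat.cast_sub hn1] at this
    simpa using this
  have hη1 : η < 1 := by
    by_contra h
    push_neg at h
    nlinarith
  have hα8 : α < 1/8 := by linarith
  have hα2 : (64:ℝ) < 1/α^2 := by
    rw [lt_div_iff₀ (by positivity)]
    nlinarith
  have hfloor : (64:ℤ) ≤ ⌊1/α^2⌋ := by
    have := Int.lt_floor_add_one (1/α^2)
    have h2 := Int.le_floor.mpr (le_of_lt hα2 : ((64:ℤ):ℝ) ≤ 1/α^2)
    exact h2
  set K : ℕ := (⌊1/α^2⌋ - 1).toNat with hKdef
  have hKZ : (K : ℤ) = ⌊1/α^2⌋ - 1 := Int.toNat_of_nonneg (by omega)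
  have hK63 : 63 ≤ K := by omega
  have hK1 : 1 ≤ K := by omega
  have hKpos : (0:ℝ) < K := by
    have : (1:ℝ) ≤ K := by exact_mod_cast hK1
    linarith
  have hKup : (K:ℝ) ≤ 1/α^2 - 1 := by
    have h1 : ((K:ℤ):ℝ) = (K:ℝ) := by push_cast; ring
    have h2 : ((⌊1/α^2⌋ : ℤ) : ℝ) ≤ 1/α^2 := Int.floor_le _
    rw [← h1, hKZ]
    push_cast
    linarith
  have hKlow : 1/α^2 - 2 ≤ (K:ℝ) := by
    have h2 : 1/α^2 < (⌊1/α^2⌋ : ℝ) + 1 := Int.lt_floor_add_one _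
    have h1 : ((K:ℤ):ℝ) = (K:ℝ) := by push_cast; ring
    rw [← h1, hKZ]
    push_cast
    linarith
  set τ : ℝ := α^2 * n / K with hτdef
  have hτpos : 0 < τ := by positivity
  have hKτ : (K:ℝ) * τ = α^2 * n := by
    rw [hτdef]; field_simp
  have hK1R : (1:ℝ) ≤ K := by exact_mod_cast hK1
  have hτle : τ ≤ α^2 * n := by
    rw [hτdef, div_le_iff₀ hKpos]
    nlinarith [mul_nonneg (by positivity : (0:ℝ) ≤ α^2*n) (by linarith : (0:ℝ) ≤ (K:ℝ)-1)]
  clear_value τ K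
  -- abbreviations
  have hZcard : ∀ i, 1 ≤ i → 8*α*n ≤ (((casc G τ x i).2).ncard : ℝ) := by
    intro i hi
    have h1 : G.neighborSet x ⊆ (casc G τ x i).2 := by
      have : G.neighborSet x ⊆ (casc G τ x 1).2 := by
        simp [casc]
      exact this.trans (cZ_mono G τ x hi)
    have h2 := Set.ncard_le_ncard h1 (Set.toFinite _)
    have h3 : ((G.neighborSet x).ncard : ℝ) ≤ (((casc G τ x i).2).ncard : ℝ) := by
      exact_mod_cast h2
    nlinarith
  -- split lemma: for v outside Z_i, its neighbours in Z_i are spread over the X_j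
  have hsplit : ∀ i, 1 ≤ i → ∀ v, v ∉ (casc G τ x i).2 →
      nbrIn G v ((casc G τ x i).2) ≤ ∑ j ∈ Finset.Icc 1 i, nbrIn G v ((casc G τ x j).1) := by
    intro i hi v hv
    have hadj : ¬ G.Adj v x := not_adj_of_not_mem_cZ G τ x hi hv
    calc nbrIn G v ((casc G τ x i).2)
        = nbrIn G v ({x} ∪ ⋃ j ∈ Finset.Icc 1 i, (casc G τ x j).1) := by
          rw [← cZ_eq_union]
      _ ≤ nbrIn G v {x} + nbrIn G v (⋃ j ∈ Finset.Icc 1 i, (casc G τ x j).1) :=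
          nbrIn_union_le G v _ _
      _ = nbrIn G v (⋃ j ∈ Finset.Icc 1 i, (casc G τ x j).1) := by
          rw [nbrIn_singleton_eq_zero G hadj]; omega
      _ ≤ ∑ j ∈ Finset.Icc 1 i, nbrIn G v ((casc G τ x j).1) :=
          nbrIn_biUnion_le G v _ _
  -- each old layer contributes < τ
  have hless : ∀ i, ∀ v, v ∉ (casc G τ x i).2 → ∀ j, 1 ≤ j → j + 1 ≤ i →
      (nbrIn G v ((casc G τ x j).1) : ℝ) < τ := by
    intro i v hv j hj hji
    apply nbrIn_lt_of_not_mem G τ x hj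
    intro h
    exact hv (cZ_mono G τ x hji h)
  -- termination lemma
  have hterm : ∀ i, 1 ≤ i → i ≤ K →
      (((casc G τ x i).2ᶜ).ncard : ℝ) ≤ 7*α*n → (casc G τ x (i+1)).2 = Set.univ := by
    intro i hi hiK hY
    obtain ⟨m, rfl⟩ : ∃ m, i = m + 1 := ⟨i - 1, by omega⟩
    have hsub : ((casc G τ x (m+1)).2)ᶜ ⊆ (casc G τ x (m+2)).1 := by
      intro v hv
      rw [Set.mem_compl_iff] at hv
      rw [casc_succ_succ]
      refine ⟨hv, ?_⟩
      -- count neighbours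
      have hdegv := hdeg v
      have hds := deg_split G v ((casc G τ x (m+1)).2)
      have hsp := hsplit (m+1) (by omega) v hv
      have hYv : (nbrIn G v (((casc G τ x (m+1)).2)ᶜ) : ℝ) ≤ 7*α*n :=
        le_trans (by exact_mod_cast nbrIn_le_ncard G v _) hY
      -- sum over Icc 1 (m+1) = Icc 1 m plus top
      have hsum : (∑ j ∈ Finset.Icc 1 (m+1), (nbrIn G v ((casc G τ x j).1) : ℝ))
          ≤ (m:ℝ) * τ + (nbrIn G v ((casc G τ x (m+1)).1) : ℝ) := by
        rw [Finset.sum_Icc_succ_top (by omega : 1 ≤ m + 1)]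
        have hbound : ∀ j ∈ Finset.Icc 1 m, (nbrIn G v ((casc G τ x j).1) : ℝ) ≤ τ := by
          intro j hj
          rw [Finset.mem_Icc] at hj
          exact le_of_lt (hless (m+1) v hv j hj.1 (by omega))
        have h1 : (∑ j ∈ Finset.Icc 1 m, (nbrIn G v ((casc G τ x j).1) : ℝ))
            ≤ (Finset.Icc 1 m).card • τ := Finset.sum_le_card_nsmul _ _ _ hbound
        rw [Nat.card_Icc, nsmul_eq_mul] at h1
        simp only [Nat.add_sub_cancel] at h1
        linarith
      have hspR : (nbrIn G v ((casc G τ x (m+1)).2) : ℝ)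
          ≤ ∑ j ∈ Finset.Icc 1 (m+1), (nbrIn G v ((casc G τ x j).1) : ℝ) := by
        exact_mod_cast hsp
      have hmτ : (m:ℝ) * τ ≤ α^2 * n := by
        rw [← hKτ]
        have h : (m:ℝ) ≤ (K:ℝ) := by exact_mod_cast (by omega : m ≤ K)
        exact mul_le_mul_of_nonneg_right h (le_of_lt hτpos)
      have hdsR : ((G.neighborSet v).ncard : ℝ)
          = (nbrIn G v ((casc G τ x (m+1)).2) : ℝ)
            + (nbrIn G v (((casc G τ x (m+1)).2)ᶜ) : ℝ) := by exact_mod_cast hds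
      have h8 : 8*α*n ≤ η*n :=
        mul_le_mul_of_nonneg_right (by linarith) (le_of_lt hnpos)
      have hfin : τ ≤ (nbrIn G v ((casc G τ x (m+1)).1) : ℝ) := by
        have hαn : 8*α^2*n ≤ α*n := by
          nlinarith [mul_le_mul_of_nonneg_right (by linarith : 8*α ≤ 1)
            (mul_nonneg hα.le hnpos.le)]
        have hτα : τ ≤ α^2*n := hτle
        linarith
      exact hfin
    have : ((casc G τ x (m+1)).2) ∪ ((casc G τ x (m+1)).2)ᶜ ⊆ (casc G τ x (m+2)).2 := by
      rw [casc_succ_succ]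
      apply Set.union_subset Set.subset_union_left
      intro v hv
      right
      rw [casc_succ_succ] at hsub
      exact hsub hv
    rw [Set.union_compl_self] at this
    exact Set.eq_univ_of_univ_subset this
  -- growth lemma
  have hgrow : ∀ i, 1 ≤ i → i ≤ K →
      7*α*n < (((casc G τ x i).2ᶜ).ncard : ℝ) →
      6*α^2*n ≤ (((casc G τ x (i+1)).1).ncard : ℝ) := by
    intro i hi hiK hY
    obtain ⟨m, rfl⟩ : ∃ m, i = m + 1 := ⟨i - 1, by omega⟩
    set Y : Set V := ((casc G τ x (m+1)).2)ᶜ with hYdef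
    set Z : Set V := (casc G τ x (m+1)).2 with hZdef
    set X' : Set V := (casc G τ x (m+2)).1 with hX'def
    have hcutY := hcut Y
    rw [compl_compl] at hcutY
    rw [eBetween_eq_sum] at hcutY
    -- pointwise bound
    have hpt : ∀ v ∈ Y.toFinite.toFinset, (nbrIn G v Z : ℝ)
        ≤ if v ∈ X' then (Z.ncard : ℝ) else α^2*n := by
      intro v hv
      rw [Set.Finite.mem_toFinset] at hv
      by_cases hvX : v ∈ X'
      · simp only [hvX, if_true]
        exact_mod_cast nbrIn_le_ncard G v Z
      · simp only [hvX, if_false]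
        have hvZ : v ∉ Z := hv
        have hsp : (nbrIn G v Z : ℝ)
            ≤ ∑ j ∈ Finset.Icc 1 (m+1), (nbrIn G v ((casc G τ x j).1) : ℝ) := by
          exact_mod_cast hsplit (m+1) (by omega) v hvZ
        have hbound : ∀ j ∈ Finset.Icc 1 (m+1), (nbrIn G v ((casc G τ x j).1) : ℝ) ≤ τ := by
          intro j hj
          rw [Finset.mem_Icc] at hj
          rcases Nat.lt_or_ge j (m+1) with h | h
          · exact le_of_lt (hless (m+1) v hvZ j hj.1 (by omega))
          · have hjm : j = m + 1 := by omega
            subst hjm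
            by_contra hcon
            push_neg at hcon
            apply hvX
            rw [hX'def, casc_succ_succ]
            exact ⟨hvZ, le_of_lt hcon⟩
        have hsum : (∑ j ∈ Finset.Icc 1 (m+1), (nbrIn G v ((casc G τ x j).1) : ℝ))
            ≤ ((m:ℝ)+1) * τ := by
          calc _ ≤ (Finset.Icc 1 (m+1)).card • τ := Finset.sum_le_card_nsmul _ _ _ hbound
            _ = ((m:ℝ)+1) * τ := by rw [Nat.card_Icc]; simp [nsmul_eq_mul]
        have hmτ : ((m:ℝ)+1) * τ ≤ α^2 * n := by
          rw [← hKτ]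
          have : ((m:ℝ)+1) ≤ (K:ℝ) := by exact_mod_cast (by omega : m + 1 ≤ K)
          nlinarith
        linarith
    have hsum2 : (∑ v ∈ Y.toFinite.toFinset, (nbrIn G v Z : ℝ))
        ≤ (X'.ncard : ℝ) * (Z.ncard : ℝ) + (Y.ncard : ℝ) * (α^2*n) := by
      calc (∑ v ∈ Y.toFinite.toFinset, (nbrIn G v Z : ℝ))
          ≤ ∑ v ∈ Y.toFinite.toFinset, (if v ∈ X' then (Z.ncard : ℝ) else α^2*n) :=
            Finset.sum_le_sum hpt
        _ = ∑ v ∈ Y.toFinite.toFinset.filter (· ∈ X'), (Z.ncard : ℝ)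
            + ∑ v ∈ Y.toFinite.toFinset.filter (¬ · ∈ X'), (α^2*n) := by
            rw [Finset.sum_ite]
        _ ≤ (X'.ncard : ℝ) * (Z.ncard : ℝ) + (Y.ncard : ℝ) * (α^2*n) := by
            have hc1 : (Y.toFinite.toFinset.filter (· ∈ X')).card ≤ X'.ncard := by
              rw [Set.ncard_eq_toFinset_card X' X'.toFinite]
              apply Finset.card_le_card
              intro v hv
              rw [Finset.mem_filter] at hv
              rw [Set.Finite.mem_toFinset]
              exact hv.2
            have hc2 : (Y.toFinite.toFinset.filter (¬ · ∈ X')).card ≤ Y.ncard := by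
              rw [Set.ncard_eq_toFinset_card Y Y.toFinite]
              exact Finset.card_filter_le _ _
            rw [Finset.sum_const, Finset.sum_const, nsmul_eq_mul, nsmul_eq_mul]
            have hZ0 : (0:ℝ) ≤ (Z.ncard:ℝ) := Nat.cast_nonneg _
            have hαn0 : (0:ℝ) ≤ α^2*(n:ℝ) := by positivity
            have hm1 := mul_le_mul_of_nonneg_right
              (by exact_mod_cast hc1 :
                ((Y.toFinite.toFinset.filter (· ∈ X')).card :ℝ) ≤ (X'.ncard:ℝ)) hZ0
            have hm2 := mul_le_mul_of_nonneg_right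
              (by exact_mod_cast hc2 :
                ((Y.toFinite.toFinset.filter (¬ · ∈ X')).card :ℝ) ≤ (Y.ncard:ℝ)) hαn0
            linarith
    have hcutY2 : α * (Y.ncard : ℝ) * (Z.ncard : ℝ)
        ≤ (X'.ncard : ℝ) * (Z.ncard : ℝ) + (Y.ncard : ℝ) * (α^2*n) := by
      refine le_trans hcutY ?_
      rw [Nat.cast_sum]
      exact hsum2
    have hZc : 8*α*n ≤ (Z.ncard : ℝ) := hZcard (m+1) (by omega)
    have hYc : 7*α*n < (Y.ncard : ℝ) := hY
    have hZpos : (0:ℝ) < (Z.ncard:ℝ) := by nlinarith [mul_pos hα hnpos]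
    have h2 : α*(n:ℝ) ≤ (Z.ncard:ℝ)/8 := by linarith
    have hαY : (0:ℝ) ≤ α * (Y.ncard:ℝ) := mul_nonneg hα.le (Nat.cast_nonneg _)
    have h3 : α^2*(n:ℝ)*(Y.ncard:ℝ) ≤ (Z.ncard:ℝ)/8 * (α*(Y.ncard:ℝ)) := by
      nlinarith [mul_le_mul_of_nonneg_right h2 hαY]
    have h4 : 6*α^2*(n:ℝ)*(Z.ncard:ℝ) ≤ (X'.ncard:ℝ)*(Z.ncard:ℝ) := by
      nlinarith [mul_lt_mul_of_pos_right hYc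
        (mul_pos (mul_pos (by norm_num : (0:ℝ)<7/8) hα) hZpos)]
    have h5 : 6*α^2*(n:ℝ) * (Z.ncard:ℝ) ≤ (X'.ncard:ℝ) * (Z.ncard:ℝ) := h4
    exact le_of_mul_le_mul_right (by linarith) hZpos
  -- coverage
  have hcardV : (Set.univ : Set V).ncard = n := by
    rw [Set.ncard_univ, Nat.card_eq_fintype_card, hn]
  have hcov : (casc G τ x K).2 = Set.univ := by
    by_contra hKuniv
    have hnotuniv : ∀ i, i ≤ K → (casc G τ x i).2 ≠ Set.univ := by
      intro i hiK h
      exact hKuniv (Set.eq_univ_of_univ_subset (h ▸ cZ_mono G τ x hiK))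
    have hgrow' : ∀ i, 1 ≤ i → i + 1 ≤ K →
        6*α^2*n ≤ (((casc G τ x (i+1)).1).ncard : ℝ) := by
      intro i hi hiK
      apply hgrow i hi (by omega)
      by_contra h
      push_neg at h
      exact hnotuniv (i+1) hiK (hterm i hi (by omega) h)
    have hZgrow : ∀ m, m + 1 ≤ K →
        (m:ℝ) * (6*α^2*n) ≤ (((casc G τ x (m+1)).2).ncard : ℝ) := by
      intro m
      induction m with
      | zero => intro _; simp
      | succ p ih =>
        intro hpK
        have h1 := ih (by omega)
        have h2 := hgrow' (p+1) (by omega) hpK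
        have hZeq : (casc G τ x (p+2)).2 = (casc G τ x (p+1)).2 ∪ (casc G τ x (p+2)).1 := by
          rw [casc_succ_succ]
        have hdisj : Disjoint ((casc G τ x (p+1)).2) ((casc G τ x (p+2)).1) :=
          (cX_disj_cZ G τ x (p+1)).symm
        have hcard : ((casc G τ x (p+2)).2).ncard
            = ((casc G τ x (p+1)).2).ncard + ((casc G τ x (p+2)).1).ncard := by
          rw [hZeq]
          exact Set.ncard_union_eq hdisj (Set.toFinite _) (Set.toFinite _)
        have hcardR : (((casc G τ x (p+2)).2).ncard : ℝ)
            = (((casc G τ x (p+1)).2).ncard : ℝ) + (((casc G τ x (p+2)).1).ncard : ℝ) := by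
          exact_mod_cast hcard
        push_cast
        linarith
    have hfinal := hZgrow (K-1) (by omega)
    rw [show K - 1 + 1 = K by omega] at hfinal
    have hle : (((casc G τ x K).2).ncard : ℝ) ≤ n := by
      have := Set.ncard_le_ncard (Set.subset_univ ((casc G τ x K).2)) (Set.toFinite _)
      rw [hcardV] at this
      exact_mod_cast this
    have hKm1 : ((K-1 : ℕ):ℝ) = (K:ℝ) - 1 := by
      rw [Nat.cast_sub hK1]; simp
    rw [hKm1] at hfinal
    have hinv : (1/α^2) * α^2 = 1 := by field_simp
    have hα64 : α^2 ≤ 1/64 := by nlinarith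
    nlinarith [mul_le_mul_of_nonneg_right hKlow (by positivity : (0:ℝ) ≤ 6*α^2*n),
      mul_pos (mul_pos (by norm_num : (0:ℝ) < 6) (by positivity : (0:ℝ) < α^2)) hnpos]
  -- assemble
  refine ⟨K, fun i => (casc G τ x i).1, hK1, le_of_eq hKZ, ?_, ?_, by simp [casc], ?_⟩
  · intro i _ j _ hij
    rcases Nat.lt_or_ge i j with h | h
    · exact cX_pairwise_disj G τ x h
    · exact (cX_pairwise_disj G τ x (by omega : j < i)).symm
  · have hKeq := cZ_eq_union G τ x K
    rw [hcov] at hKeq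
    have hxnot : ∀ j, x ∉ (casc G τ x j).1 := by
      intro j
      match j with
      | 0 => simp [casc]
      | (m+1) => exact fun h =>
          Set.disjoint_left.mp (cX_disj_cZ G τ x m) h (mem_cZ G τ x m)
    ext v
    simp only [Set.mem_iUnion, Set.mem_compl_iff, Set.mem_singleton_iff, Set.mem_Icc]
    constructor
    · rintro ⟨j, ⟨hj1, hjK⟩, hvj⟩ rfl
      exact hxnot j hvj
    · intro hvx
      have hv : v ∈ ({x} : Set V) ∪ ⋃ j ∈ Finset.Icc 1 K, (casc G τ x j).1 := by
        rw [← hKeq]; exact Set.mem_univ v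
      rcases hv with h | h
      · exact absurd h hvx
      · simp only [Set.mem_iUnion, Finset.mem_Icc] at h
        obtain ⟨j, ⟨hj1, hjK⟩, hvj⟩ := h
        exact ⟨j, ⟨hj1, hjK⟩, hvj⟩
  · intro i hi hik v hv
    obtain ⟨m, rfl⟩ : ∃ m, i = m + 1 := ⟨i - 1, by omega⟩
    have hv' : v ∈ (casc G τ x (m+2)).1 := hv
    rw [casc_succ_succ] at hv'
    rw [← hτdef]
    exact hv'.2
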